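/- arXiv:2003.00966 — 3 statements merged into one kernel-verified Lean document; each statement's English description precedes it below -/
import Mathlib

section
/- For each $k \in \mathbb{N}$ there is a constant $C_k > 0$ such that for all $f \in C_b^{k+1}(\mathbb{R}^n)$: $\max_{|\beta|=k} \|\partial_x^{\beta} f\|_{C^0_b(\mathbb{R}^n)} \leq C_k \|f\|_{C^0_b(\mathbb{R}^n)}^{\frac{1}{k+1}} \big( \max_{|\alpha|=k+1} \|\partial_x^{\alpha} f\|_{C^0_b(\mathbb{R}^n)} \big)^{\frac{k}{k+1}}$. -/
noncomputable section
open MeasureTheory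

abbrev V (n : ℕ) := EuclideanSpace ℝ (Fin n)

noncomputable def pd (n k : ℕ) {E : Type*} [NormedAddCommGroup E] [NormedSpace ℝ E]
    (d : Fin k → Fin n) (f : V n → E) (x : V n) : E :=
  iteratedFDeriv ℝ k f x (fun i => EuclideanSpace.single (d i) 1)

noncomputable def cbNorm (n k : ℕ) {E : Type*} [NormedAddCommGroup E] [NormedSpace ℝ E]
    (f : V n → E) : ℝ :=
  ⨆ i : Fin (k+1), ⨆ x : V n, ‖iteratedFDeriv ℝ i f x‖

noncomputable def hSemi (n i : ℕ) (τ : ℝ) {E : Type*} [NormedAddCommGroup E] [NormedSpace ℝ E]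
    (f : V n → E) : ℝ :=
  ⨆ p : V n × V n, ‖iteratedFDeriv ℝ i f p.1 - iteratedFDeriv ℝ i f p.2‖ / ‖p.1 - p.2‖ ^ τ

noncomputable def hNorm (n m : ℕ) (τ : ℝ) {E : Type*} [NormedAddCommGroup E] [NormedSpace ℝ E]
    (f : V n → E) : ℝ :=
  cbNorm n m f + ⨆ i : Fin (m+1), hSemi n i τ f

def MemHold (n m : ℕ) (τ : ℝ) {E : Type*} [NormedAddCommGroup E] [NormedSpace ℝ E]
    (f : V n → E) : Prop :=
  ContDiff ℝ m f ∧ ∃ C : ℝ, ∀ i ≤ m, (∀ x, ‖iteratedFDeriv ℝ i f x‖ ≤ C) ∧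
    ∀ x y : V n, ‖iteratedFDeriv ℝ i f x - iteratedFDeriv ℝ i f y‖ ≤ C * ‖x - y‖ ^ τ

lemma aux_mvt {E : Type*} [NormedAddCommGroup E] [NormedSpace ℝ E]
    {g g' : ℝ → E} (hg : ∀ t, HasDerivAt g (g' t) t) {C : ℝ}
    (hC : ∀ t, ‖g' t‖ ≤ C) (a b : ℝ) : ‖g b - g a‖ ≤ C * ‖b - a‖ :=
  (convex_univ : Convex ℝ (Set.univ : Set ℝ)).norm_image_sub_le_of_norm_hasDerivWithin_le
    (fun t _ => (hg t).hasDerivWithinAt) (fun t _ => hC t) trivial trivial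

lemma key1d {E : Type*} [NormedAddCommGroup E] [NormedSpace ℝ E] {g g1 g2 : ℝ → E} {M0 M2 : ℝ}
    (hg : ∀ t, HasDerivAt g (g1 t) t) (hg1 : ∀ t, HasDerivAt g1 (g2 t) t)
    (h0 : ∀ t, ‖g t‖ ≤ M0) (h2 : ∀ t, ‖g2 t‖ ≤ M2) {h : ℝ} (hh : 0 < h) :
    ‖g1 0‖ ≤ 2 * M0 / h + M2 * h := by
  have hM2 : 0 ≤ M2 := le_trans (norm_nonneg _) (h2 0)
  have hφd : ∀ t, HasDerivAt (fun t => g t - t • g1 0) (g1 t - g1 0) t := by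
    intro t
    have h1 : HasDerivAt (fun t : ℝ => t • g1 0) ((1:ℝ) • g1 0) t :=
      (hasDerivAt_id t).smul_const _
    simpa only [one_smul] using (hg t).fun_sub h1
  have hb : ∀ t ∈ Set.Icc (0:ℝ) h, ‖g1 t - g1 0‖ ≤ M2 * h := by
    intro t ht
    have h1 := aux_mvt hg1 h2 0 t
    have h2' : ‖t - 0‖ ≤ h := by
      rw [sub_zero, Real.norm_eq_abs, abs_of_nonneg ht.1]; exact ht.2
    calc ‖g1 t - g1 0‖ ≤ M2 * ‖t - 0‖ := h1
      _ ≤ M2 * h := by nlinarith [norm_nonneg (t - (0:ℝ))]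
  have hmvt : ‖(g h - h • g1 0) - (g 0 - (0:ℝ) • g1 0)‖ ≤ (M2 * h) * ‖h - 0‖ :=
    (convex_Icc 0 h).norm_image_sub_le_of_norm_hasDerivWithin_le
      (fun t _ => (hφd t).hasDerivWithinAt) hb ⟨le_rfl, hh.le⟩ ⟨hh.le, le_rfl⟩
  have hnh : ‖h - 0‖ = h := by rw [sub_zero, Real.norm_eq_abs, abs_of_pos hh]
  rw [hnh, zero_smul, sub_zero] at hmvt
  have key : ‖h • g1 0‖ ≤ 2 * M0 + M2 * h * h := by
    have h3 : ‖h • g1 0‖ ≤ ‖g h - g 0‖ + ‖(g h - h • g1 0) - g 0‖ := by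
      have : h • g1 0 = (g h - g 0) - ((g h - h • g1 0) - g 0) := by abel
      conv_lhs => rw [this]
      exact norm_sub_le _ _
    have h4 : ‖g h - g 0‖ ≤ 2 * M0 := by
      calc ‖g h - g 0‖ ≤ ‖g h‖ + ‖g 0‖ := norm_sub_le _ _
        _ ≤ 2 * M0 := by linarith [h0 h, h0 0]
    linarith [hmvt]
  rw [norm_smul, Real.norm_eq_abs, abs_of_pos hh] at key
  have h5 : ‖g1 0‖ ≤ (2 * M0 + M2 * h * h) / h := (le_div_iff₀ hh).2 (by nlinarith)
  calc ‖g1 0‖ ≤ (2 * M0 + M2 * h * h) / h := h5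
    _ = 2 * M0 / h + M2 * h := by field_simp

lemma sq_bound {x M0 M2 : ℝ} (hx : 0 ≤ x) (hM0 : 0 ≤ M0) (hM2 : 0 ≤ M2)
    (H : ∀ h : ℝ, 0 < h → x ≤ 2 * M0 / h + M2 * h) : x ^ 2 ≤ 8 * M0 * M2 := by
  rcases hM0.eq_or_lt with h0 | h0
  · -- M0 = 0 : show x = 0
    have hx0 : x = 0 := by
      by_contra hne
      have hxpos : 0 < x := lt_of_le_of_ne hx (Ne.symm hne)
      have := H (x / (2 * (M2 + 1))) (by positivity)
      rw [← h0] at this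
      have hd : M2 * (x / (2 * (M2 + 1))) < x := by
        rw [div_eq_mul_inv]
        have h1 : M2 * (x * (2 * (M2 + 1))⁻¹) = x * (M2 / (2 * (M2 + 1))) := by
          field_simp
        rw [h1]
        have h2 : M2 / (2 * (M2 + 1)) < 1 := by
          rw [div_lt_one (by positivity)]; linarith
        nlinarith
      simp at this
      linarith
    simp [hx0]; positivity
  rcases hM2.eq_or_lt with h2 | h2
  · have hx0 : x = 0 := by
      by_contra hne
      have hxpos : 0 < x := lt_of_le_of_ne hx (Ne.symm hne)
      have := H (4 * M0 / x) (by positivity)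
      rw [← h2] at this
      have : x ≤ 2 * M0 / (4 * M0 / x) := by linarith [this]
      rw [div_div_eq_mul_div, le_div_iff₀ (by positivity)] at this
      nlinarith
    simp [hx0]; positivity
  · set s0 := Real.sqrt (2 * M0) with hs0def
    set s2 := Real.sqrt M2 with hs2def
    have hs0 : s0 ^ 2 = 2 * M0 := Real.sq_sqrt (by linarith)
    have hs2 : s2 ^ 2 = M2 := Real.sq_sqrt hM2
    have hs0p : 0 < s0 := Real.sqrt_pos.2 (by linarith)
    have hs2p : 0 < s2 := Real.sqrt_pos.2 h2
    have hH := H (s0 / s2) (by positivity)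
    have he : 2 * M0 / (s0 / s2) + M2 * (s0 / s2) = 2 * (s0 * s2) := by
      rw [← hs0, ← hs2]; field_simp; ring
    rw [he] at hH
    nlinarith

lemma chain (k : ℕ) : ∃ C : ℝ, 1 ≤ C ∧ ∀ a : ℕ → ℝ, (∀ j, 0 ≤ a j) →
    (∀ i : ℕ, i + 1 ≤ k → (a (i+1))^2 ≤ 8 * a i * a (i+2)) →
    (a k)^(k+1) ≤ C * a 0 * (a (k+1))^k := by
  induction k with
  | zero =>
    exact ⟨1, le_rfl, fun a ha _ => by simp [pow_one]⟩
  | succ m ih =>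
    obtain ⟨C, hC1, hrec⟩ := ih
    refine ⟨8^(m+1) * C, one_le_mul_of_one_le_of_one_le (one_le_pow₀ (by norm_num)) hC1, ?_⟩
    intro a ha hmid
    have h1 : (a (m+1))^2 ≤ 8 * a m * a (m+2) := hmid m le_rfl
    have h2 : (a m)^(m+1) ≤ C * a 0 * (a (m+1))^m := hrec a ha (fun i hi => hmid i (by omega))
    have key : (a (m+1))^(m+2) * (a (m+1))^m ≤
        (8^(m+1) * C * a 0 * (a (m+2))^(m+1)) * (a (m+1))^m := by
      calc (a (m+1))^(m+2) * (a (m+1))^m = ((a (m+1))^2)^(m+1) := by ring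
        _ ≤ (8 * a m * a (m+2))^(m+1) := pow_le_pow_left₀ (sq_nonneg _) h1 (m+1)
        _ = 8^(m+1) * (a m)^(m+1) * (a (m+2))^(m+1) := by rw [mul_pow, mul_pow]
        _ ≤ 8^(m+1) * (C * a 0 * (a (m+1))^m) * (a (m+2))^(m+1) := by
            apply mul_le_mul_of_nonneg_right _ (pow_nonneg (ha _) _)
            exact mul_le_mul_of_nonneg_left h2 (by positivity)
        _ = (8^(m+1) * C * a 0 * (a (m+2))^(m+1)) * (a (m+1))^m := by ring
    rcases (ha (m+1)).eq_or_lt with hb0 | hb0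
    · rw [← hb0, zero_pow (by omega)]
      have : (0:ℝ) ≤ 8^(m+1) * C * a 0 * (a (m+2))^(m+1) := by
        apply mul_nonneg (mul_nonneg (by positivity) (ha 0)) (pow_nonneg (ha _) _)
      linarith
    · exact le_of_mul_le_mul_right key (pow_pos hb0 m)

lemma hasDerivAt_pd (n j : ℕ) (f : V n → ℂ) (hf : ContDiff ℝ (↑(j+1)) f)
    (e : Fin n) (d : Fin j → Fin n) (x : V n) (t : ℝ) :
    HasDerivAt (fun s : ℝ => pd n j d f (x + s • EuclideanSpace.single e 1))
      (pd n (j+1) (Fin.cons e d) f (x + t • EuclideanSpace.single e 1)) t := by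
  set v : V n := EuclideanSpace.single e 1 with hv
  set w : Fin j → V n := fun i => EuclideanSpace.single (d i) 1 with hw
  have hF : Differentiable ℝ (iteratedFDeriv ℝ j f) :=
    hf.differentiable_iteratedFDeriv (by exact_mod_cast lt_add_one j)
  have hline : HasDerivAt (fun s : ℝ => x + s • v) v t := by
    simpa using ((hasDerivAt_id t).smul_const v).const_add x
  have hcomp : HasDerivAt (fun s : ℝ => iteratedFDeriv ℝ j f (x + s • v))
      (fderiv ℝ (iteratedFDeriv ℝ j f) (x + t • v) v) t :=
    ((hF (x + t • v)).hasFDerivAt).comp_hasDerivAt t hline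
  have happ := ((ContinuousMultilinearMap.apply ℝ (fun _ : Fin j => V n) ℂ
      w).hasFDerivAt).comp_hasDerivAt t hcomp
  have hval : ∀ y : V n, pd n (j+1) (Fin.cons e d) f y
      = (fderiv ℝ (iteratedFDeriv ℝ j f) y) v w := by
    intro y
    have h0 : (fun i => EuclideanSpace.single ((Fin.cons e d : Fin (j+1) → Fin n) i) 1)
        = Fin.cons v w := by
      funext i
      refine Fin.cases ?_ ?_ i <;> simp [hv, hw]
    rw [pd, h0, iteratedFDeriv_succ_apply_left, Fin.cons_zero, Fin.tail_cons]
  rw [hval]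
  exact happ

/-- Landau–Kolmogorov type interpolation inequality for intermediate
derivatives in the sup norm. -/
theorem stmt3 (n k : ℕ) (hk : 1 ≤ k) :
    ∃ C > 0, ∀ f : V n → ℂ, ContDiff ℝ (k+1) f →
      (∃ A : ℝ, ∀ i ≤ k+1, ∀ x, ‖iteratedFDeriv ℝ i f x‖ ≤ A) →
      ∀ d : Fin k → Fin n,
        (⨆ x : V n, ‖pd n k d f x‖) ≤
          C * (⨆ x : V n, ‖f x‖) ^ ((1 : ℝ)/(k+1)) *
            (⨆ b : Fin (k+1) → Fin n, ⨆ x : V n, ‖pd n (k+1) b f x‖) ^ ((k : ℝ)/(k+1)) := by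
  obtain ⟨C, hC1, hchain⟩ := chain k
  refine ⟨C, lt_of_lt_of_le one_pos hC1, ?_⟩
  rintro f hf ⟨A, hA⟩ d
  have hA0 : 0 ≤ A := le_trans (norm_nonneg _) (hA 0 (by omega) 0)
  have hne : Nonempty (Fin n) := ⟨d ⟨0, hk⟩⟩
  set a : ℕ → ℝ := fun j => ⨆ b : Fin j → Fin n, ⨆ x : V n, ‖pd n j b f x‖ with ha_def
  have hpdA : ∀ j, j ≤ k+1 → ∀ (b : Fin j → Fin n) (x : V n), ‖pd n j b f x‖ ≤ A := by
    intro j hj b x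
    refine le_trans ?_ (hA j hj x)
    have h1 := (iteratedFDeriv ℝ j f x).le_opNorm (fun i => EuclideanSpace.single (b i) 1)
    simpa [pd, EuclideanSpace.norm_single] using h1
  have hanon : ∀ j, 0 ≤ a j := fun j =>
    Real.iSup_nonneg fun b => Real.iSup_nonneg fun x => norm_nonneg _
  have hbdd1 : ∀ j, j ≤ k+1 → ∀ b : Fin j → Fin n,
      BddAbove (Set.range fun x : V n => ‖pd n j b f x‖) := by
    intro j hj b
    exact ⟨A, by rintro y ⟨x, rfl⟩; exact hpdA j hj b x⟩
  have hbdd2 : ∀ j, j ≤ k+1 →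
      BddAbove (Set.range fun b : Fin j → Fin n => ⨆ x : V n, ‖pd n j b f x‖) := by
    intro j hj
    refine ⟨A, ?_⟩
    rintro y ⟨b, rfl⟩
    exact Real.iSup_le (fun x => hpdA j hj b x) hA0
  have hle_a : ∀ j, j ≤ k+1 → ∀ (b : Fin j → Fin n) (x : V n), ‖pd n j b f x‖ ≤ a j := by
    intro j hj b x
    refine le_trans (le_ciSup (hbdd1 j hj b) x) ?_
    exact le_ciSup (hbdd2 j hj) b
  -- the middle inequalities
  have hmid : ∀ i : ℕ, i + 1 ≤ k → (a (i+1))^2 ≤ 8 * a i * a (i+2) := by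
    intro i hi
    have hprod : (0:ℝ) ≤ 8 * a i * a (i+2) :=
      mul_nonneg (mul_nonneg (by norm_num) (hanon i)) (hanon (i+2))
    have hsq : ∀ (b : Fin (i+1) → Fin n) (x : V n),
        ‖pd n (i+1) b f x‖ ≤ Real.sqrt (8 * a i * a (i+2)) := by
      intro b x
      set e : Fin n := b 0 with he
      set v : V n := EuclideanSpace.single e 1 with hv
      have hf1 : ContDiff ℝ (↑(i+1)) f := hf.of_le (by exact_mod_cast by omega)
      have hf2 : ContDiff ℝ (↑(i+2)) f := hf.of_le (by exact_mod_cast by omega)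
      have hg : ∀ s : ℝ, HasDerivAt (fun s : ℝ => pd n i (Fin.tail b) f (x + s • v))
          (pd n (i+1) b f (x + s • v)) s := by
        intro s
        have h1 := hasDerivAt_pd n i f hf1 e (Fin.tail b) x s
        rwa [he, Fin.cons_self_tail] at h1
      have hg1 : ∀ s : ℝ, HasDerivAt (fun s : ℝ => pd n (i+1) b f (x + s • v))
          (pd n (i+2) (Fin.cons e b) f (x + s • v)) s :=
        fun s => hasDerivAt_pd n (i+1) f hf2 e b x s
      have hb0 : ∀ s : ℝ, ‖pd n i (Fin.tail b) f (x + s • v)‖ ≤ a i :=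
        fun s => hle_a i (by omega) _ _
      have hb2 : ∀ s : ℝ, ‖pd n (i+2) (Fin.cons e b) f (x + s • v)‖ ≤ a (i+2) :=
        fun s => hle_a (i+2) (by omega) _ _
      have hH : ∀ h : ℝ, 0 < h →
          ‖pd n (i+1) b f (x + (0:ℝ) • v)‖ ≤ 2 * a i / h + a (i+2) * h :=
        fun h hh => key1d hg hg1 hb0 hb2 hh
      have hsb := sq_bound (norm_nonneg _) (hanon i) (hanon (i+2)) hH
      have hx0 : x + (0:ℝ) • v = x := by simp
      rw [hx0] at hsb
      exact Real.le_sqrt_of_sq_le hsb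
    have hsup : a (i+1) ≤ Real.sqrt (8 * a i * a (i+2)) :=
      Real.iSup_le (fun b => Real.iSup_le (fun x => hsq b x) (Real.sqrt_nonneg _))
        (Real.sqrt_nonneg _)
    have h2 := pow_le_pow_left₀ (hanon (i+1)) hsup 2
    rwa [Real.sq_sqrt hprod] at h2
  have hfinal : (a k)^(k+1) ≤ C * a 0 * (a (k+1))^k := hchain a hanon hmid
  -- identify a 0 with the sup norm of f
  have ha0 : a 0 = ⨆ x : V n, ‖f x‖ := by
    rw [ha_def]
    simp only [pd, iteratedFDeriv_zero_apply]
    exact ciSup_const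
  -- LHS bound
  have hS : (⨆ x : V n, ‖pd n k d f x‖) ≤ a k :=
    le_ciSup (hbdd2 k (by omega)) d
  refine le_trans hS ?_
  -- rpow manipulations
  have hkne : (k+1 : ℕ) ≠ 0 := by omega
  have hrhs_nonneg : (0:ℝ) ≤ C * a 0 * (a (k+1))^k :=
    mul_nonneg (mul_nonneg (by linarith) (hanon 0)) (pow_nonneg (hanon (k+1)) k)
  have hinv : (1:ℝ)/((k:ℝ)+1) = ((k+1 : ℕ) : ℝ)⁻¹ := by push_cast; rw [one_div]
  have hak : a k ≤ (C * a 0 * (a (k+1))^k) ^ ((1:ℝ)/((k:ℝ)+1)) := by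
    rw [hinv]
    calc a k = ((a k)^(k+1)) ^ (((k+1:ℕ):ℝ))⁻¹ :=
          (Real.pow_rpow_inv_natCast (hanon k) hkne).symm
      _ ≤ (C * a 0 * (a (k+1))^k) ^ (((k+1:ℕ):ℝ))⁻¹ :=
          Real.rpow_le_rpow (pow_nonneg (hanon k) _) hfinal (by positivity)
  have hexpand : (C * a 0 * (a (k+1))^k) ^ ((1:ℝ)/((k:ℝ)+1))
      = C ^ ((1:ℝ)/((k:ℝ)+1)) * (a 0) ^ ((1:ℝ)/((k:ℝ)+1))
        * ((a (k+1))^k) ^ ((1:ℝ)/((k:ℝ)+1)) := by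
    rw [Real.mul_rpow (mul_nonneg (by linarith) (hanon 0)) (pow_nonneg (hanon (k+1)) k),
      Real.mul_rpow (by linarith) (hanon 0)]
  have hlast : ((a (k+1))^k) ^ ((1:ℝ)/((k:ℝ)+1)) = (a (k+1)) ^ ((k:ℝ)/((k:ℝ)+1)) := by
    rw [← Real.rpow_natCast (a (k+1)) k, ← Real.rpow_mul (hanon (k+1))]
    congr 1
    ring
  have hCp : C ^ ((1:ℝ)/((k:ℝ)+1)) ≤ C := by
    calc C ^ ((1:ℝ)/((k:ℝ)+1)) ≤ C ^ (1:ℝ) := by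
          apply Real.rpow_le_rpow_of_exponent_le hC1
          rw [div_le_one (by positivity)]
          have : (0:ℝ) ≤ (k:ℝ) := Nat.cast_nonneg k
          linarith
      _ = C := Real.rpow_one C
  rw [ha0] at hexpand hak
  show a k ≤ C * (⨆ x : V n, ‖f x‖) ^ ((1:ℝ)/((k:ℝ)+1)) * (a (k+1)) ^ ((k:ℝ)/((k:ℝ)+1))
  calc (a k) ≤ C ^ ((1:ℝ)/((k:ℝ)+1)) * (⨆ x : V n, ‖f x‖) ^ ((1:ℝ)/((k:ℝ)+1))
        * (a (k+1)) ^ ((k:ℝ)/((k:ℝ)+1)) := by rw [← hlast, ← hexpand]; exact hak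
    _ ≤ C * (⨆ x : V n, ‖f x‖) ^ ((1:ℝ)/((k:ℝ)+1)) * (a (k+1)) ^ ((k:ℝ)/((k:ℝ)+1)) := by
        apply mul_le_mul_of_nonneg_right _ (Real.rpow_nonneg (hanon (k+1)) _)
        exact mul_le_mul_of_nonneg_right hCp (Real.rpow_nonneg (Real.iSup_nonneg fun x => norm_nonneg _) _)
end
end

section
/- Let $\tilde{m} \in \mathbb{N}$ and $\alpha \in \mathbb{N}_0^n$ with $|\alpha| \leq \tilde{m}$, and set $\theta = \frac{|\alpha|}{\tilde{m}}$. Then there is a constant $C>0$ such that for all $R \geq 1$ and all $f \in C_b^{\tilde{m}}(\mathbb{R}^n)$: $\sup_{|x| \geq R} |\partial_x^{\alpha} f(x)| \leq C \, \|f\|_{C_b^0(\mathbb{R}^n \setminus B_R(0))}^{1-\theta} \, \|f\|_{C_b^{\tilde{m}}(\mathbb{R}^n \setminus B_R(0))}^{\theta}$. -/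
set_option maxHeartbeats 1000000


noncomputable section
open MeasureTheory

noncomputable def extCb (n k : ℕ) (R : ℝ) {E : Type*} [NormedAddCommGroup E] [NormedSpace ℝ E]
    (f : V n → E) : ℝ :=
  ⨆ i : Fin (k+1), ⨆ x : {x : V n // R ≤ ‖x‖}, ‖iteratedFDeriv ℝ i f x‖

open Set in

lemma landau_base {E : Type*} [NormedAddCommGroup E] [NormedSpace ℝ E]
    (g : ℝ → E) (hg1 : Differentiable ℝ g) (hg2 : Differentiable ℝ (deriv g))
    {A B : ℝ} (hA : 0 < A) (hB : 0 < B)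
    (hgA : ∀ t, 0 ≤ t → ‖g t‖ ≤ A) (hgB : ∀ t, 0 ≤ t → ‖deriv (deriv g) t‖ ≤ B) :
    ‖deriv g 0‖ ≤ 3 * Real.sqrt (A * B) := by
  set h := Real.sqrt (A / B) with hh
  have hhpos : 0 < h := Real.sqrt_pos.mpr (div_pos hA hB)
  have hh2 : h ^ 2 = A / B := Real.sq_sqrt (div_pos hA hB).le
  set c := deriv g 0 with hc
  -- Lipschitz bound for deriv g on [0, h]
  have lip : ∀ s ∈ Icc (0:ℝ) h, ‖deriv g s - c‖ ≤ B * h := by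
    intro s hs
    have key : ‖deriv g s - deriv g 0‖ ≤ B * ‖s - 0‖ :=
      Convex.norm_image_sub_le_of_norm_deriv_le (fun x _ => hg2 x)
        (fun x hx => hgB x hx) (convex_Ici 0) (Set.mem_Ici.mpr le_rfl) (hs.1 : (0:ℝ) ≤ s)
    rw [Real.norm_eq_abs, sub_zero, abs_of_nonneg hs.1] at key
    calc ‖deriv g s - c‖ ≤ B * s := key
    _ ≤ B * h := by nlinarith [hs.2]
  -- Taylor-type bound via mean value on φ u = g u - u • c
  have hφ : ∀ s ∈ Icc (0:ℝ) h, DifferentiableAt ℝ (fun u => g u - u • c) s := by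
    intro s _
    exact (hg1 s).sub ((differentiable_id.smul_const c) s)
  have hφd : ∀ s : ℝ, deriv (fun u => g u - u • c) s = deriv g s - c := by
    intro s
    have h1 : HasDerivAt (fun u : ℝ => u • c) c s := by
      simpa using (hasDerivAt_id s).smul_const c
    exact (((hg1 s).hasDerivAt).sub h1).deriv
  have taylor : ‖(g h - h • c) - (g 0 - (0:ℝ) • c)‖ ≤ (B * h) * ‖h - 0‖ := by
    refine Convex.norm_image_sub_le_of_norm_deriv_le hφ ?_ (convex_Icc 0 h) ?_ ?_
    · intro x hx; rw [hφd]; exact lip x hx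
    · exact ⟨le_refl 0, hhpos.le⟩
    · exact ⟨hhpos.le, le_refl h⟩
  rw [zero_smul, sub_zero, Real.norm_eq_abs, sub_zero, abs_of_nonneg hhpos.le] at taylor
  have hnc : h * ‖c‖ ≤ 2 * A + B * h * h := by
    have t1 : ‖h • c‖ ≤ ‖g h - g 0‖ + ‖g h - h • c - g 0‖ := by
      have e : (g h - g 0) - (g h - h • c - g 0) = h • c := by abel
      calc ‖h • c‖ = ‖(g h - g 0) - (g h - h • c - g 0)‖ := by rw [e]
      _ ≤ ‖g h - g 0‖ + ‖g h - h • c - g 0‖ := norm_sub_le _ _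
    have t2 : ‖g h - g 0‖ ≤ 2 * A := by
      calc ‖g h - g 0‖ ≤ ‖g h‖ + ‖g 0‖ := norm_sub_le _ _
      _ ≤ 2 * A := by have := hgA h hhpos.le; have := hgA 0 le_rfl; linarith
    have t3 : ‖h • c‖ = h * ‖c‖ := by
      rw [norm_smul, Real.norm_eq_abs, abs_of_nonneg hhpos.le]
    nlinarith [taylor]
  -- now h * sqrt(A*B) = A
  have hAB : h * Real.sqrt (A * B) = A := by
    rw [hh, ← Real.sqrt_mul (div_pos hA hB).le]
    have : A / B * (A * B) = A ^ 2 := by field_simp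
    rw [this, Real.sqrt_sq hA.le]
  have hBh : B * h * h = A := by
    have : B * h ^ 2 = A := by rw [hh2]; field_simp
    nlinarith [this]
  have : h * ‖c‖ ≤ 3 * A := by linarith
  have h3 : ‖c‖ ≤ 3 * A / h := by
    rw [le_div_iff₀ hhpos]; nlinarith
  calc ‖c‖ ≤ 3 * A / h := h3
  _ = 3 * Real.sqrt (A * B) := by
    have hne : h ≠ 0 := hhpos.ne'
    rw [eq_comm, eq_div_iff hhpos.ne']
    linear_combination 3 * hAB

lemma hasDerivAt_comp_line {n : ℕ} {E' : Type*} [NormedAddCommGroup E'] [NormedSpace ℝ E']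
    (F : V n → E') (hF : Differentiable ℝ F) (x v : V n) (t : ℝ) :
    HasDerivAt (fun s : ℝ => F (x + s • v)) (fderiv ℝ F (x + t • v) v) t := by
  have hc : HasDerivAt (fun s : ℝ => x + s • v) v t := by
    simpa using ((hasDerivAt_id t).smul_const v).const_add x
  exact ((hF (x + t • v)).hasFDerivAt.comp_hasDerivAt t hc)

-- norm of fderiv of iterated equals norm of next iterated
lemma norm_fderiv_iter {n k : ℕ} (f : V n → ℂ) (y : V n) :
    ‖fderiv ℝ (iteratedFDeriv ℝ k f) y‖ = ‖iteratedFDeriv ℝ (k+1) f y‖ := by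
  rw [fderiv_iteratedFDeriv]
  simp [LinearIsometryEquiv.norm_map]

lemma key_step {n k : ℕ} {f : V n → ℂ}
    (h2 : ContDiff ℝ 2 (iteratedFDeriv ℝ k f)) {R A B : ℝ}
    (hA : 0 < A) (hB : 0 < B)
    (hbA : ∀ y : V n, R ≤ ‖y‖ → ‖iteratedFDeriv ℝ k f y‖ ≤ A)
    (hbB : ∀ y : V n, R ≤ ‖y‖ → ‖iteratedFDeriv ℝ (k+2) f y‖ ≤ B)
    {x : V n} (hx : R ≤ ‖x‖) :
    ‖iteratedFDeriv ℝ (k+1) f x‖ ≤ 3 * Real.sqrt (A * B) := by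
  set F := iteratedFDeriv ℝ k f with hF
  have hFdiff : Differentiable ℝ F := h2.differentiable (by norm_num)
  have hF1 : ContDiff ℝ 1 (fderiv ℝ F) := h2.fderiv_right (by norm_num)
  have hF1diff : Differentiable ℝ (fderiv ℝ F) := hF1.differentiable (by norm_num)
  -- F₁ := iteratedFDeriv (k+1) f; its fderiv relates to iteratedFDeriv (k+2)
  set F1 := iteratedFDeriv ℝ (k+1) f with hF1def
  have hgoal : ‖iteratedFDeriv ℝ (k+1) f x‖ = ‖fderiv ℝ F x‖ := (norm_fderiv_iter f x).symm
  rw [hgoal]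
  have hsqrtnn : (0:ℝ) ≤ 3 * Real.sqrt (A * B) := by positivity
  refine ContinuousLinearMap.opNorm_le_bound _ hsqrtnn ?_
  intro w
  rcases eq_or_ne w 0 with rfl | hw
  · simp
  have hwpos : 0 < ‖w‖ := norm_pos_iff.mpr hw
  set v : V n := if 0 ≤ (inner ℝ x w : ℝ) then w else -w with hv
  have hvw : ‖v‖ = ‖w‖ := by rw [hv]; split_ifs <;> simp
  have hvpos : 0 < ‖v‖ := by rw [hvw]; exact hwpos
  have hxv : 0 ≤ (inner ℝ x v : ℝ) := by
    rw [hv]; split_ifs with hi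
    · exact hi
    · rw [inner_neg_right]; linarith [lt_of_not_ge hi]
  have hnw : ‖fderiv ℝ F x v‖ = ‖fderiv ℝ F x w‖ := by
    rw [hv]; split_ifs <;> simp
  -- the ray stays in the exterior region
  have hline : ∀ t : ℝ, 0 ≤ t → R ≤ ‖x + t • v‖ := by
    intro t ht
    have hsq : ‖x‖ ^ 2 ≤ ‖x + t • v‖ ^ 2 := by
      rw [norm_add_sq_real]
      have h1 : (0:ℝ) ≤ inner ℝ x (t • v) := by
        rw [real_inner_smul_right]; positivity
      linarith [sq_nonneg ‖t • v‖, sq_nonneg (t * ‖v‖), h1]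
    calc R ≤ ‖x‖ := hx
    _ ≤ ‖x + t • v‖ := by
        exact (pow_le_pow_iff_left₀ (norm_nonneg x) (norm_nonneg _) (by norm_num)).mp hsq
  -- G and its derivatives
  set G : ℝ → (ContinuousMultilinearMap ℝ (fun _ : Fin k => V n) ℂ) :=
    fun t => F (x + t • v) with hG
  have hGd : ∀ t : ℝ, HasDerivAt G (fderiv ℝ F (x + t • v) v) t :=
    fun t => hasDerivAt_comp_line F hFdiff x v t
  have hGdiff : Differentiable ℝ G := fun t => (hGd t).differentiableAt
  have hderivG : deriv G = fun t => fderiv ℝ F (x + t • v) v :=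
    funext fun t => (hGd t).deriv
  -- curry equivalence
  set e := continuousMultilinearCurryLeftEquiv ℝ (fun _ : Fin (k+1) => V n) ℂ with he
  have hfe : ∀ y : V n, fderiv ℝ F y = e (F1 y) := by
    intro y
    exact congrFun (fderiv_iteratedFDeriv (𝕜 := ℝ) (f := f) (n := k)) y
  set Λ : (ContinuousMultilinearMap ℝ (fun _ : Fin (k+1) => V n) ℂ) →L[ℝ]
      (ContinuousMultilinearMap ℝ (fun _ : Fin k => V n) ℂ) :=
    (ContinuousLinearMap.apply ℝ _ v).comp
      (e.toContinuousLinearEquiv : _ →L[ℝ] _) with hΛ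
  have hΛapp : ∀ z, Λ z = (e z) v := fun z => rfl
  have hΛnorm : ∀ z, ‖Λ z‖ ≤ ‖z‖ * ‖v‖ := by
    intro z
    rw [hΛapp]
    calc ‖(e z) v‖ ≤ ‖e z‖ * ‖v‖ := (e z).le_opNorm v
    _ = ‖z‖ * ‖v‖ := by rw [e.norm_map]
  have hF1diff' : Differentiable ℝ F1 := by
    have hrw : F1 = fun y => e.symm (fderiv ℝ F y) := funext fun y => by rw [hfe y]; simp
    rw [hrw]
    have hL : Differentiable ℝ (fun z : (V n →L[ℝ] ContinuousMultilinearMap ℝ (fun _ : Fin k => V n) ℂ) =>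
        e.symm z) := by exact e.symm.toContinuousLinearEquiv.toContinuousLinearMap.differentiable
    exact hL.comp hF1diff
  have hderivG2 : ∀ t : ℝ, HasDerivAt (deriv G) (Λ (fderiv ℝ F1 (x + t • v) v)) t := by
    intro t
    rw [hderivG]
    have h1 : ∀ s : ℝ, fderiv ℝ F (x + s • v) v = Λ (F1 (x + s • v)) := by
      intro s; rw [hfe, hΛapp]
    simp_rw [h1]
    exact Λ.hasFDerivAt.comp_hasDerivAt t (hasDerivAt_comp_line F1 hF1diff' x v t)
  have hG2diff : Differentiable ℝ (deriv G) := fun t => (hderivG2 t).differentiableAt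
  have hBnd2 : ∀ t : ℝ, 0 ≤ t → ‖deriv (deriv G) t‖ ≤ ‖v‖ ^ 2 * B := by
    intro t ht
    rw [(hderivG2 t).deriv]
    calc ‖Λ (fderiv ℝ F1 (x + t • v) v)‖ ≤ ‖fderiv ℝ F1 (x + t • v) v‖ * ‖v‖ :=
      hΛnorm _
    _ ≤ (‖fderiv ℝ F1 (x + t • v)‖ * ‖v‖) * ‖v‖ := by
        have := (fderiv ℝ F1 (x + t • v)).le_opNorm v
        exact mul_le_mul_of_nonneg_right this (norm_nonneg v)
    _ = ‖iteratedFDeriv ℝ (k+2) f (x + t • v)‖ * ‖v‖ ^ 2 := by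
        rw [norm_fderiv_iter f (x + t • v)]; ring
    _ ≤ ‖v‖ ^ 2 * B := by
        have := hbB _ (hline t ht)
        nlinarith [sq_nonneg ‖v‖, norm_nonneg (x + t • v)]
  have hBndA : ∀ t : ℝ, 0 ≤ t → ‖G t‖ ≤ A := fun t ht => hbA _ (hline t ht)
  have hB2pos : 0 < ‖v‖ ^ 2 * B := by positivity
  have := landau_base G hGdiff hG2diff hA hB2pos hBndA hBnd2
  have hG0 : deriv G 0 = fderiv ℝ F x v := by
    rw [hderivG]; simp
  rw [hG0] at this
  have hsq : Real.sqrt (A * (‖v‖ ^ 2 * B)) = ‖v‖ * Real.sqrt (A * B) := by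
    rw [show A * (‖v‖ ^ 2 * B) = ‖v‖ ^ 2 * (A * B) by ring,
      Real.sqrt_mul (sq_nonneg _), Real.sqrt_sq (norm_nonneg v)]
  rw [hsq] at this
  rw [← hnw]
  calc ‖fderiv ℝ F x v‖ ≤ 3 * (‖v‖ * Real.sqrt (A * B)) := this
  _ = 3 * Real.sqrt (A * B) * ‖w‖ := by rw [← hvw]; ring


lemma rpow_le_max (K : ℝ) (hK : 0 < K) {θ : ℝ} (h0 : 0 ≤ θ) (h1 : θ ≤ 1) :
    K ^ θ ≤ max 1 K := by
  rcases le_total 1 K with h | h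
  · calc K ^ θ ≤ K ^ (1:ℝ) := Real.rpow_le_rpow_of_exponent_le h h1
    _ = K := Real.rpow_one K
    _ ≤ max 1 K := le_max_right _ _
  · calc K ^ θ ≤ 1 := Real.rpow_le_one hK.le h h0
    _ ≤ max 1 K := le_max_left _ _

lemma arith (m : ℕ) (hm : 1 ≤ m) : ∃ C : ℝ, 1 ≤ C ∧ ∀ M : ℕ → ℝ, (∀ k, 0 ≤ M k) →
    (∀ k, k + 2 ≤ m → M (k+1) ≤ 3 * Real.sqrt (M k * M (k+2))) →
    ∀ j ≤ m, M j ≤ C * M 0 ^ (1 - (j:ℝ)/(m:ℝ)) * M m ^ ((j:ℝ)/(m:ℝ)) := by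
  induction m, hm using Nat.le_induction with
  | base =>
    refine ⟨1, le_rfl, ?_⟩
    intro M hM0 _ j hj
    interval_cases j
    · norm_num
    · norm_num
  | succ m hm IH =>
    obtain ⟨C, hC1, hC⟩ := IH
    have hCpos : 0 < C := lt_of_lt_of_le one_pos hC1
    have hmpos : 0 < (m:ℝ) := by exact_mod_cast hm
    set mr : ℝ := (m:ℝ) with hmr
    have hmrne : mr ≠ 0 := ne_of_gt hmpos
    have hmr1 : (0:ℝ) < mr + 1 := by linarith
    have hcast : ((m+1:ℕ):ℝ) = mr + 1 := by push_cast [hmr]; ring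
    set K : ℝ := (9*C) ^ (mr/(mr+1)) with hKdef
    have hKpos : 0 < K := Real.rpow_pos_of_pos (by linarith) _
    refine ⟨C * max 1 K, ?_, ?_⟩
    · have h1 : (1:ℝ) ≤ max 1 K := le_max_left _ _
      nlinarith
    intro M hM0 hchain j hj
    have hchain' : ∀ k, k + 2 ≤ m → M (k+1) ≤ 3 * Real.sqrt (M k * M (k+2)) :=
      fun k hk => hchain k (by omega)
    have hIH := hC M hM0 hchain'
    -- key estimate for M m
    have key : M m ≤ K * M 0 ^ (1/(mr+1)) * M (m+1) ^ (mr/(mr+1)) := by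
      rcases eq_or_lt_of_le (hM0 m) with h0 | hpos
      · rw [← h0]
        exact mul_nonneg (mul_nonneg hKpos.le (Real.rpow_nonneg (hM0 0) _))
          (Real.rpow_nonneg (hM0 (m+1)) _)
      · obtain ⟨m', hm'⟩ : ∃ m', m = m' + 1 := ⟨m - 1, by omega⟩
        have hm'r : (m':ℝ) = mr - 1 := by rw [hmr]; push_cast [hm']; ring
        have hidx : m' + 1 = m := by omega
        have hidx2 : m' + 2 = m + 1 := by omega
        have h1 : M m ≤ 3 * Real.sqrt (M m' * M (m+1)) := by
          have := hchain m' (by omega)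
          rwa [hidx, hidx2] at this
        have h2 : M m' ≤ C * M 0 ^ (1/mr) * M m ^ ((mr-1)/mr) := by
          have h := hIH m' (by omega)
          have e1 : 1 - (m':ℝ)/mr = 1/mr := by rw [hm'r]; field_simp; ring
          have e2 : (m':ℝ)/mr = (mr-1)/mr := by rw [hm'r]
          rwa [e1, e2] at h
        have h3 : M m ^ 2 ≤ 9 * (M m' * M (m+1)) := by
          have hnn : 0 ≤ M m' * M (m+1) := mul_nonneg (hM0 _) (hM0 _)
          nlinarith [Real.sq_sqrt hnn, Real.sqrt_nonneg (M m' * M (m+1)), h1, hpos]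
        have h4 : M m ^ 2 ≤ (9 * C * M 0 ^ (1/mr) * M (m+1)) * M m ^ ((mr-1)/mr) := by
          have hb := hM0 (m+1)
          nlinarith [h3, mul_le_mul_of_nonneg_right h2 hb,
            Real.rpow_nonneg (hM0 0) (1/mr), Real.rpow_nonneg (hM0 m) ((mr-1)/mr)]
        have hqpos : 0 < M m ^ ((mr-1)/mr) := Real.rpow_pos_of_pos hpos _
        have h5 : M m ^ ((mr+1)/mr) ≤ 9 * C * M 0 ^ (1/mr) * M (m+1) := by
          have hq : M m ^ ((mr+1)/mr) * M m ^ ((mr-1)/mr) = M m ^ 2 := by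
            rw [← Real.rpow_add hpos,
              show (mr+1)/mr + (mr-1)/mr = (2:ℝ) by field_simp; ring, Real.rpow_two]
          rw [← mul_le_mul_iff_of_pos_right hqpos, hq]
          exact h4
        have hP : (0:ℝ) ≤ mr/(mr+1) := by positivity
        have h6 := Real.rpow_le_rpow (Real.rpow_nonneg (hM0 m) _) h5 hP
        have hLHS : (M m ^ ((mr+1)/mr)) ^ (mr/(mr+1)) = M m := by
          rw [← Real.rpow_mul (hM0 m),
            show (mr+1)/mr * (mr/(mr+1)) = (1:ℝ) by field_simp, Real.rpow_one]
        have hRHS : (9 * C * M 0 ^ (1/mr) * M (m+1)) ^ (mr/(mr+1))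
            = K * M 0 ^ (1/(mr+1)) * M (m+1) ^ (mr/(mr+1)) := by
          rw [Real.mul_rpow (mul_nonneg (by positivity) (Real.rpow_nonneg (hM0 0) _)) (hM0 (m+1)),
            Real.mul_rpow (by positivity) (Real.rpow_nonneg (hM0 0) _),
            ← Real.rpow_mul (hM0 0),
            show 1/mr * (mr/(mr+1)) = 1/(mr+1) by field_simp]
        rw [hLHS, hRHS] at h6
        exact h6
    -- conclude for each j ≤ m+1
    rcases Nat.lt_or_ge j (m+1) with hjm | hjm
    · have hjm' : j ≤ m := by omega
      have hθ0 : (0:ℝ) ≤ (j:ℝ)/mr := by positivity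
      have hθ1 : (j:ℝ)/mr ≤ 1 := by
        rw [div_le_one hmpos, hmr]; exact Nat.cast_le.mpr hjm'
      have step1 := hIH j hjm'
      have step2 : M m ^ ((j:ℝ)/mr)
          ≤ (K * M 0 ^ (1/(mr+1)) * M (m+1) ^ (mr/(mr+1))) ^ ((j:ℝ)/mr) :=
        Real.rpow_le_rpow (hM0 m) key hθ0
      have hexp : (K * M 0 ^ (1/(mr+1)) * M (m+1) ^ (mr/(mr+1))) ^ ((j:ℝ)/mr)
          = K ^ ((j:ℝ)/mr) * M 0 ^ ((j:ℝ)/(mr*(mr+1))) * M (m+1) ^ ((j:ℝ)/(mr+1)) := by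
        rw [Real.mul_rpow (mul_nonneg hKpos.le (Real.rpow_nonneg (hM0 0) _))
            (Real.rpow_nonneg (hM0 (m+1)) _),
          Real.mul_rpow hKpos.le (Real.rpow_nonneg (hM0 0) _),
          ← Real.rpow_mul (hM0 0), ← Real.rpow_mul (hM0 (m+1)),
          show 1/(mr+1) * ((j:ℝ)/mr) = (j:ℝ)/(mr*(mr+1)) by
            rw [div_mul_div_comm, one_mul, mul_comm (mr+1) mr],
          show mr/(mr+1) * ((j:ℝ)/mr) = (j:ℝ)/(mr+1) by
            rw [div_mul_div_comm, mul_comm (mr+1) mr, mul_comm mr ((j:ℝ)),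
              mul_comm ((j:ℝ)) mr, mul_div_mul_left _ _ hmrne]]
      have hmerge : M 0 ^ (1 - (j:ℝ)/mr) * M 0 ^ ((j:ℝ)/(mr*(mr+1)))
          = M 0 ^ (1 - (j:ℝ)/(mr+1)) := by
        rw [← Real.rpow_add_of_nonneg (hM0 0) (by linarith) (by positivity)]
        congr 1
        field_simp
        ring
      have hKle : K ^ ((j:ℝ)/mr) ≤ max 1 K := rpow_le_max K hKpos hθ0 hθ1
      have hfinal : M j ≤ C * K ^ ((j:ℝ)/mr) * M 0 ^ (1 - (j:ℝ)/(mr+1))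
          * M (m+1) ^ ((j:ℝ)/(mr+1)) := by
        calc M j ≤ C * M 0 ^ (1 - (j:ℝ)/mr) * M m ^ ((j:ℝ)/mr) := step1
        _ ≤ C * M 0 ^ (1 - (j:ℝ)/mr)
            * (K ^ ((j:ℝ)/mr) * M 0 ^ ((j:ℝ)/(mr*(mr+1))) * M (m+1) ^ ((j:ℝ)/(mr+1))) := by
            have hnn : (0:ℝ) ≤ C * M 0 ^ (1 - (j:ℝ)/mr) :=
              mul_nonneg hCpos.le (Real.rpow_nonneg (hM0 0) _)
            have := step2
            rw [hexp] at this
            exact mul_le_mul_of_nonneg_left this hnn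
        _ = C * K ^ ((j:ℝ)/mr) * (M 0 ^ (1 - (j:ℝ)/mr) * M 0 ^ ((j:ℝ)/(mr*(mr+1))))
            * M (m+1) ^ ((j:ℝ)/(mr+1)) := by ring
        _ = C * K ^ ((j:ℝ)/mr) * M 0 ^ (1 - (j:ℝ)/(mr+1)) * M (m+1) ^ ((j:ℝ)/(mr+1)) := by
            rw [hmerge]
      rw [hcast]
      calc M j ≤ C * K ^ ((j:ℝ)/mr) * M 0 ^ (1 - (j:ℝ)/(mr+1))
          * M (m+1) ^ ((j:ℝ)/(mr+1)) := hfinal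
      _ ≤ C * max 1 K * M 0 ^ (1 - (j:ℝ)/(mr+1)) * M (m+1) ^ ((j:ℝ)/(mr+1)) := by
          have hnn1 : (0:ℝ) ≤ M 0 ^ (1 - (j:ℝ)/(mr+1)) := Real.rpow_nonneg (hM0 0) _
          have hnn2 : (0:ℝ) ≤ M (m+1) ^ ((j:ℝ)/(mr+1)) := Real.rpow_nonneg (hM0 (m+1)) _
          have : C * K ^ ((j:ℝ)/mr) ≤ C * max 1 K :=
            mul_le_mul_of_nonneg_left hKle hCpos.le
          nlinarith [mul_le_mul_of_nonneg_right this hnn1]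
    · have hjeq : j = m + 1 := by omega
      subst hjeq
      rw [hcast, div_self hmr1.ne', sub_self, Real.rpow_zero, Real.rpow_one]
      have h1 : (1:ℝ) ≤ max 1 K := le_max_left _ _
      have h2 : (1:ℝ) ≤ C * (1 ⊔ K) := by nlinarith
      nlinarith [mul_le_mul_of_nonneg_right h2 (hM0 (m+1))]


lemma sqrt_limit {α b c : ℝ} (hb : 0 ≤ b) (hc : 0 ≤ c)
    (H : ∀ ε : ℝ, 0 < ε → α ≤ 3 * Real.sqrt ((b+ε)*(c+ε))) :
    α ≤ 3 * Real.sqrt (b*c) := by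
  have hcont : ContinuousAt (fun ε : ℝ => 3 * Real.sqrt ((b+ε)*(c+ε))) 0 := by fun_prop
  have htends : Filter.Tendsto (fun ε : ℝ => 3 * Real.sqrt ((b+ε)*(c+ε)))
      (nhdsWithin 0 (Set.Ioi 0)) (nhds (3 * Real.sqrt ((b+0)*(c+0)))) :=
    (hcont.tendsto).mono_left nhdsWithin_le_nhds
  have := ge_of_tendsto htends (by filter_upwards [self_mem_nhdsWithin] using fun ε hε => H ε hε)
  simpa using this

/-- exterior-domain interpolation estimate for a single derivative `∂^α f`,
with constant independent of `R ≥ 1`. -/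
theorem stmt5 (n m : ℕ) (hm : 1 ≤ m) (j : ℕ) (hj : j ≤ m) (d : Fin j → Fin n) :
    ∃ C > 0, ∀ R : ℝ, 1 ≤ R → ∀ f : V n → ℂ, ContDiff ℝ m f →
      (∃ A : ℝ, ∀ i ≤ m, ∀ x, ‖iteratedFDeriv ℝ i f x‖ ≤ A) →
      ∀ x : V n, R ≤ ‖x‖ →
        ‖pd n j d f x‖ ≤ C * extCb n 0 R f ^ (1 - (j : ℝ)/(m : ℝ)) *
          extCb n m R f ^ ((j : ℝ)/(m : ℝ)) := by
  obtain ⟨C, hC1, harith⟩ := arith m hm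
  refine ⟨C, lt_of_lt_of_le one_pos hC1, ?_⟩
  intro R hR f hf hbd x hx
  haveI hne : Nonempty {y : V n // R ≤ ‖y‖} := ⟨⟨x, hx⟩⟩
  obtain ⟨Abd, hAbd⟩ := hbd
  set a : ℕ → ℝ := fun k => ⨆ y : {y : V n // R ≤ ‖y‖}, ‖iteratedFDeriv ℝ k f y‖ with ha
  have hbdd : ∀ k, k ≤ m → BddAbove (Set.range fun y : {y : V n // R ≤ ‖y‖} =>
      ‖iteratedFDeriv ℝ k f y‖) :=
    fun k hk => ⟨Abd, by rintro _ ⟨y, rfl⟩; exact hAbd k hk y⟩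
  have hle : ∀ k, k ≤ m → ∀ y : V n, R ≤ ‖y‖ → ‖iteratedFDeriv ℝ k f y‖ ≤ a k :=
    fun k hk y hy => le_ciSup (hbdd k hk) (⟨y, hy⟩ : {y : V n // R ≤ ‖y‖})
  have ha0 : ∀ k, k ≤ m → 0 ≤ a k :=
    fun k hk => le_trans (norm_nonneg _) (hle k hk x hx)
  have hchain : ∀ k, k + 2 ≤ m → a (k+1) ≤ 3 * Real.sqrt (a k * a (k+2)) := by
    intro k hk
    have heps : ∀ ε : ℝ, 0 < ε → a (k+1) ≤ 3 * Real.sqrt ((a k + ε) * (a (k+2) + ε)) := by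
      intro ε hε
      have h2 : ContDiff ℝ 2 (iteratedFDeriv ℝ k f) := by
        apply hf.iteratedFDeriv_right
        exact_mod_cast (by omega : 2 + k ≤ m)
      have hA : 0 < a k + ε := by have := ha0 k (by omega); linarith
      have hB : 0 < a (k+2) + ε := by have := ha0 (k+2) (by omega); linarith
      refine ciSup_le ?_
      rintro ⟨y, hy⟩
      exact key_step h2 hA hB
        (fun z hz => le_trans (hle k (by omega) z hz) (by linarith))
        (fun z hz => le_trans (hle (k+2) (by omega) z hz) (by linarith)) hy
    exact sqrt_limit (ha0 k (by omega)) (ha0 (k+2) (by omega)) heps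
  set M : ℕ → ℝ := fun k => if k ≤ m then a k else 0 with hM
  have hM0 : ∀ k, 0 ≤ M k := by
    intro k; rw [hM]; dsimp only; split_ifs with h
    · exact ha0 k h
    · exact le_rfl
  have hMchain : ∀ k, k + 2 ≤ m → M (k+1) ≤ 3 * Real.sqrt (M k * M (k+2)) := by
    intro k hk
    simp only [hM, if_pos (by omega : k ≤ m), if_pos (by omega : k + 1 ≤ m), if_pos hk]
    exact hchain k hk
  have hMj := harith M hM0 hMchain j hj
  simp only [hM, if_pos hj, if_pos (by omega : 0 ≤ m), if_pos (le_refl m)] at hMj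
  have hpd : ‖pd n j d f x‖ ≤ ‖iteratedFDeriv ℝ j f x‖ := by
    rw [pd]
    calc ‖iteratedFDeriv ℝ j f x (fun i => EuclideanSpace.single (d i) 1)‖
        ≤ ‖iteratedFDeriv ℝ j f x‖ * ∏ i, ‖EuclideanSpace.single (d i) (1:ℝ)‖ :=
          ContinuousMultilinearMap.le_opNorm _ _
    _ = ‖iteratedFDeriv ℝ j f x‖ := by simp [EuclideanSpace.norm_single]
  have haj : ‖iteratedFDeriv ℝ j f x‖ ≤ a j := hle j hj x hx
  have hext0 : a 0 ≤ extCb n 0 R f := by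
    have hb : BddAbove (Set.range fun i : Fin 1 =>
        ⨆ y : {y : V n // R ≤ ‖y‖}, ‖iteratedFDeriv ℝ (i:ℕ) f y‖) :=
      (Set.finite_range _).bddAbove
    have h := le_ciSup hb (0 : Fin 1)
    simpa [extCb, ha] using h
  have hextm : a m ≤ extCb n m R f := by
    have hb : BddAbove (Set.range fun i : Fin (m+1) =>
        ⨆ y : {y : V n // R ≤ ‖y‖}, ‖iteratedFDeriv ℝ (i:ℕ) f y‖) :=
      (Set.finite_range _).bddAbove
    have h := le_ciSup hb (Fin.last m)
    simpa [extCb, ha, Fin.val_last] using h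
  have hmpos : (0:ℝ) < (m:ℝ) := by exact_mod_cast hm
  have e1 : (0:ℝ) ≤ 1 - (j:ℝ)/(m:ℝ) := by
    have : (j:ℝ)/(m:ℝ) ≤ 1 := by
      rw [div_le_one hmpos]; exact_mod_cast hj
    linarith
  have e2 : (0:ℝ) ≤ (j:ℝ)/(m:ℝ) := by positivity
  have hCnn : (0:ℝ) ≤ C := by linarith
  calc ‖pd n j d f x‖ ≤ a j := hpd.trans haj
  _ ≤ C * a 0 ^ (1 - (j:ℝ)/(m:ℝ)) * a m ^ ((j:ℝ)/(m:ℝ)) := hMj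
  _ ≤ C * extCb n 0 R f ^ (1 - (j:ℝ)/(m:ℝ)) * extCb n m R f ^ ((j:ℝ)/(m:ℝ)) := by
      have h1 := Real.rpow_le_rpow (ha0 0 (by omega)) hext0 e1
      have h2 := Real.rpow_le_rpow (ha0 m le_rfl) hextm e2
      exact mul_le_mul (mul_le_mul_of_nonneg_left h1 hCnn) h2
        (Real.rpow_nonneg (ha0 m le_rfl) _)
        (mul_nonneg hCnn (Real.rpow_nonneg (le_trans (ha0 0 (by omega)) hext0) _))
end
end

section
/- Let $X$ and $Y$ be complex Banach spaces and let $T \in \mathscr{L}(X,Y)$ be a Fredholm operator of index $0$ that is not invertible. Then there is $\nu > 0$ with the following property: for every $H \in \mathscr{L}(X,Y)$ with $\|H\| < \nu$ such that $T + H$ is invertible, and for every $\varepsilon > 0$, there exists $\delta \in (0, \varepsilon]$ such that for every $S \in \mathscr{L}(X,Y)$ with $\|S - T\| < \delta$, the operator $S + zH$ fails to be invertible for some $z \in \mathbb{C}$ with $|z| < \varepsilon$. -/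
/-- Two-sided invertibility of a bounded operator (bounded inverse). -/
def IsInvertibleOp {X Y : Type*} [NormedAddCommGroup X] [NormedSpace ℂ X]
    [NormedAddCommGroup Y] [NormedSpace ℂ Y] (T : X →L[ℂ] Y) : Prop :=
  ∃ S : Y →L[ℂ] X, (∀ x, S (T x) = x) ∧ (∀ y, T (S y) = y)

open ContinuousLinearMap Set Metric

set_option maxHeartbeats 1000000

private lemma finset_prod_diffOn {E : Type*} [NormedAddCommGroup E] [NormedSpace ℂ E]
    {ι : Type*} (u : Finset ι) (g : ι → E → ℂ) {s : Set E}
    (h : ∀ i ∈ u, DifferentiableOn ℂ (g i) s) :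
    DifferentiableOn ℂ (fun x => ∏ i ∈ u, g i x) s := by
  classical
  induction u using Finset.induction_on with
  | empty => simp only [Finset.prod_empty]; exact differentiableOn_const (1 : ℂ)
  | insert _ _ hnotmem ih =>
      simp only [Finset.prod_insert hnotmem]
      exact (h _ (Finset.mem_insert_self _ _)).mul
        (ih fun i hi => h i (Finset.mem_insert_of_mem hi))

private lemma not_invertible_of_fixed {X Y : Type*} [NormedAddCommGroup X] [NormedSpace ℂ X]
    [NormedAddCommGroup Y] [NormedSpace ℂ Y] {N : Submodule ℂ X}
    (P : X →L[ℂ] N) (sj : N →L[ℂ] Y) (A : X →L[ℂ] Y) (W : Y →L[ℂ] X)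
    (k : N) (hk : k ≠ 0) (hfix : P (W (sj k)) = k)
    (hWr : ∀ y, (A + sj.comp P) (W y) = y) :
    ¬ IsInvertibleOp A := by
  rintro ⟨L, hL, -⟩
  set x := W (sj k) with hx
  have hPx : P x = k := hfix
  have hAx : A x = 0 := by
    have hBx : A x + sj (P x) = sj k := by
      simpa [ContinuousLinearMap.add_apply, ContinuousLinearMap.comp_apply] using hWr (sj k)
    rw [hPx] at hBx
    rwa [add_eq_right] at hBx
  have hx0 : x = 0 := by rw [← hL x, hAx, map_zero]
  apply hk
  rw [← hPx, hx0, map_zero]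

/-- Rabier's lemma: if `T` is Fredholm of index `0` and not invertible,
there is a ball `B_ν(0)` such that for every `H` in it with `T + H` invertible and every
`ε > 0` there is `δ ∈ (0, ε]` such that every `S` with `‖S - T‖ < δ` has `S + zH` not
invertible for some `|z| < ε`. -/
theorem stmt8 {X Y : Type*} [NormedAddCommGroup X] [NormedSpace ℂ X] [CompleteSpace X]
    [NormedAddCommGroup Y] [NormedSpace ℂ Y] [CompleteSpace Y] (T : X →L[ℂ] Y)
    (hker : FiniteDimensional ℂ (LinearMap.ker (T : X →ₗ[ℂ] Y)))
    (hcl : IsClosed ((LinearMap.range (T : X →ₗ[ℂ] Y) : Submodule ℂ Y) : Set Y))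
    (hcoker : FiniteDimensional ℂ (Y ⧸ LinearMap.range (T : X →ₗ[ℂ] Y)))
    (hind : Module.finrank ℂ (LinearMap.ker (T : X →ₗ[ℂ] Y)) = Module.finrank ℂ (Y ⧸ LinearMap.range (T : X →ₗ[ℂ] Y)))
    (hninv : ¬ IsInvertibleOp T) :
    ∃ ν > 0, ∀ H : X →L[ℂ] Y, ‖H‖ < ν → IsInvertibleOp (T + H) →
      ∀ ε > 0, ∃ δ : ℝ, 0 < δ ∧ δ ≤ ε ∧ ∀ S : X →L[ℂ] Y, ‖S - T‖ < δ →
        ∃ z : ℂ, ‖z‖ < ε ∧ ¬ IsInvertibleOp (S + z • H) := by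
  classical
  haveI : FiniteDimensional ℂ (LinearMap.ker (T : X →ₗ[ℂ] Y)) := hker
  set N : Submodule ℂ X := LinearMap.ker (T : X →ₗ[ℂ] Y) with hNdef
  -- the kernel is nontrivial
  have hNne : N ≠ ⊥ := by
    intro hbot
    apply hninv
    have h0 : Module.finrank ℂ (Y ⧸ LinearMap.range (T : X →ₗ[ℂ] Y)) = 0 := by
      rw [← hind]
      have hNb : N = ⊥ := hbot
      rw [hNb]
      simp
    have hsub : Subsingleton (Y ⧸ LinearMap.range (T : X →ₗ[ℂ] Y)) := Module.finrank_zero_iff.mp h0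
    have hrange : LinearMap.range (T : X →ₗ[ℂ] Y) = ⊤ := Submodule.Quotient.subsingleton_iff.mp hsub
    have hker0 : LinearMap.ker (T : X →ₗ[ℂ] Y) = ⊥ := hbot
    let e := ContinuousLinearEquiv.ofBijective T hker0 hrange
    exact ⟨(e.symm : Y →L[ℂ] X), fun x => e.symm_apply_apply x, fun y => e.apply_symm_apply y⟩
  obtain ⟨k0x, hk0mem, hk0ne⟩ := Submodule.exists_mem_ne_zero_of_ne_bot hNne
  set k₀ : N := ⟨k0x, hk0mem⟩ with hk₀def
  have hk₀ : k₀ ≠ 0 := by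
    intro h
    exact hk0ne (by simpa [hk₀def, Submodule.mk_eq_zero] using h)
  -- continuous projection onto the kernel
  obtain ⟨P, hP⟩ := Submodule.ClosedComplemented.of_finiteDimensional N
  -- a lift of an iso between kernel and cokernel
  obtain ⟨j⟩ := FiniteDimensional.nonempty_linearEquiv_of_finrank_eq hind
  obtain ⟨s, hs⟩ := (LinearMap.range (T : X →ₗ[ℂ] Y)).mkQ.exists_rightInverse_of_surjective
      (LinearMap.range_eq_top.mpr (Submodule.mkQ_surjective _))
  set sj : N →L[ℂ] Y :=
    LinearMap.toContinuousLinearMap (s ∘ₗ (j : N →ₗ[ℂ] (Y ⧸ LinearMap.range (T : X →ₗ[ℂ] Y)))) with hsjdef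
  have hsj : ∀ k : N, (LinearMap.range (T : X →ₗ[ℂ] Y)).mkQ (sj k) = j k := by
    intro k
    have h1 := LinearMap.congr_fun hs (j k)
    simpa [hsjdef] using h1
  set F : X →L[ℂ] Y := sj.comp P with hFdef
  have hTk : ∀ k : N, T (k : X) = 0 := fun k => k.2
  -- T + F is bijective
  have hTFinj : LinearMap.ker ((T + F : X →L[ℂ] Y) : X →ₗ[ℂ] Y) = ⊥ := by
    rw [LinearMap.ker_eq_bot']
    intro x hx
    have h1 : T x + sj (P x) = 0 := by
      simpa [hFdef, ContinuousLinearMap.add_apply, ContinuousLinearMap.comp_apply] using hx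
    have h2 : j (P x) = 0 := by
      have := congrArg ((LinearMap.range (T : X →ₗ[ℂ] Y)).mkQ) h1
      have hTx : (LinearMap.range (T : X →ₗ[ℂ] Y)).mkQ (T x) = 0 := by
        simp [Submodule.mkQ_apply, Submodule.Quotient.mk_eq_zero]
      simpa [map_add, hTx, hsj] using this
    have h3 : P x = 0 := by
      have := j.injective (by simpa using h2)
      simpa using this
    have h4 : T x = 0 := by simpa [h3] using h1
    have hxN : x ∈ N := h4
    have h5 : P x = (⟨x, hxN⟩ : N) := hP ⟨x, hxN⟩
    have : (⟨x, hxN⟩ : N) = 0 := by rw [← h5, h3]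
    simpa [Submodule.mk_eq_zero] using this
  have hTFsurj : LinearMap.range ((T + F : X →L[ℂ] Y) : X →ₗ[ℂ] Y) = ⊤ := by
    rw [LinearMap.range_eq_top]
    intro y
    set k : N := j.symm ((LinearMap.range (T : X →ₗ[ℂ] Y)).mkQ y) with hk
    have h1 : (LinearMap.range (T : X →ₗ[ℂ] Y)).mkQ (y - sj k) = 0 := by
      rw [map_sub, hsj k, hk, j.apply_symm_apply, sub_self]
    have h2 : y - sj k ∈ LinearMap.range (T : X →ₗ[ℂ] Y) := by
      rw [← Submodule.Quotient.mk_eq_zero]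
      rw [Submodule.mkQ_apply] at h1
      exact h1
    obtain ⟨x₀, hx₀⟩ := LinearMap.mem_range.mp h2
    refine ⟨x₀ - (P x₀ : X) + (k : X), ?_⟩
    have hPx : P (x₀ - (P x₀ : X) + (k : X)) = k := by
      simp [map_sub, map_add, hP (P x₀), hP k]
    have hTx : T (x₀ - (P x₀ : X) + (k : X)) = T x₀ := by
      simp [map_sub, map_add, hTk (P x₀), hTk k]
    show (T + F) (x₀ - (P x₀ : X) + (k : X)) = y
    simp only [ContinuousLinearMap.add_apply, hFdef, ContinuousLinearMap.comp_apply, hPx, hTx,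
      hx₀]
    rw [show T x₀ = y - sj k from hx₀]
    abel
  set e : X ≃L[ℂ] Y := ContinuousLinearEquiv.ofBijective (T + F) hTFinj hTFsurj with hedef
  set R₀ : Y →L[ℂ] X := (e.symm : Y →L[ℂ] X) with hR₀def
  have hR₀l : ∀ x, R₀ ((T + F) x) = x := by
    intro x
    have : (T + F) x = e x := rfl
    rw [this]
    exact e.symm_apply_apply x
  have hR₀r : ∀ y, (T + F) (R₀ y) = y := fun y => e.apply_symm_apply y
  set ν : ℝ := (8 * (‖R₀‖ + 1))⁻¹ with hνdef
  have hν : 0 < ν := by positivity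
  have hνmul : ν * (8 * (‖R₀‖ + 1)) = 1 := by
    rw [hνdef]
    field_simp
  refine ⟨ν, hν, ?_⟩
  intro H hH hTH ε hε
  -- the analytic determinant function
  set u : (X →L[ℂ] Y) × ℂ → (X →L[ℂ] X) := fun p => 1 + R₀.comp (p.1 - T + p.2 • H) with hudef
  set Ω : Set ((X →L[ℂ] Y) × ℂ) := {p | ‖R₀.comp (p.1 - T + p.2 • H)‖ < 1} with hΩdef
  have hinner : Continuous fun p : (X →L[ℂ] Y) × ℂ => R₀.comp (p.1 - T + p.2 • H) := by
    have h1 : Continuous fun p : (X →L[ℂ] Y) × ℂ => p.1 - T + p.2 • H :=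
      (continuous_fst.sub continuous_const).add (continuous_snd.smul continuous_const)
    have h2 : (fun p : (X →L[ℂ] Y) × ℂ => R₀.comp (p.1 - T + p.2 • H)) =
        fun p => (ContinuousLinearMap.compL ℂ X Y X R₀) (p.1 - T + p.2 • H) := rfl
    rw [h2]
    exact (ContinuousLinearMap.compL ℂ X Y X R₀).continuous.comp h1
  have hΩopen : IsOpen Ω := isOpen_lt hinner.norm continuous_const
  have hUnit : ∀ p ∈ Ω, IsUnit (u p) := by
    intro p hp
    have hp' : ‖R₀.comp (p.1 - T + p.2 • H)‖ < 1 := hp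
    have h1 : ‖-(R₀.comp (p.1 - T + p.2 • H))‖ < 1 := by rwa [norm_neg]
    refine ⟨Units.oneSub _ h1, ?_⟩
    rw [Units.val_oneSub, sub_neg_eq_add]
  have hudiff : Differentiable ℂ u := by
    have h1 : Differentiable ℂ fun p : (X →L[ℂ] Y) × ℂ => p.1 - T + p.2 • H :=
      (differentiable_fst.sub (differentiable_const T)).add (differentiable_snd.smul_const H)
    have h2 : u = fun p => (1 : X →L[ℂ] X) +
        (ContinuousLinearMap.compL ℂ X Y X R₀) (p.1 - T + p.2 • H) := rfl
    rw [h2]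
    exact ((ContinuousLinearMap.compL ℂ X Y X R₀).differentiable.comp h1).const_add _
  set n : ℕ := Module.finrank ℂ N with hn
  set b : Module.Basis (Fin n) ℂ N := Module.finBasis ℂ N with hb
  set ℓ : Fin n → (X →L[ℂ] ℂ) := fun i => (LinearMap.toContinuousLinearMap (b.coord i)).comp P
    with hℓ
  set v : Fin n → X := fun jj => R₀ (sj (b jj)) with hv
  set f : (X →L[ℂ] Y) × ℂ → ℂ := fun p => Matrix.det (Matrix.of fun i jj =>
    LinearMap.toMatrix b b (LinearMap.id) i jj - ℓ i (Ring.inverse (u p) (v jj))) with hf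
  set Cmap : (X →L[ℂ] Y) × ℂ → (N →L[ℂ] X) :=
    fun p => (Ring.inverse (u p)).comp (R₀.comp sj) with hCmap
  set Mlin : (X →L[ℂ] Y) × ℂ → (N →ₗ[ℂ] N) :=
    fun p => LinearMap.id - ((P.comp (Cmap p)).toLinearMap) with hMlin
  have hfdet : ∀ p, f p = LinearMap.det (Mlin p) := by
    intro p
    have hMeq : (Matrix.of fun i jj => LinearMap.toMatrix b b (LinearMap.id) i jj
        - ℓ i (Ring.inverse (u p) (v jj))) = LinearMap.toMatrix b b (Mlin p) := by
      ext i jj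
      simp [hMlin, hCmap, hℓ, hv, LinearMap.toMatrix_apply, LinearMap.sub_apply, map_sub,
        Module.Basis.coord_apply, ContinuousLinearMap.comp_apply, Finsupp.sub_apply]
    calc f p = Matrix.det (Matrix.of fun i jj => LinearMap.toMatrix b b (LinearMap.id) i jj
          - ℓ i (Ring.inverse (u p) (v jj))) := rfl
      _ = Matrix.det (LinearMap.toMatrix b b (Mlin p)) := by rw [hMeq]
      _ = LinearMap.det (Mlin p) := LinearMap.det_toMatrix b _
  -- differentiability of f on Ω
  have hdiffΩ : DifferentiableOn ℂ f Ω := by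
    have hent : ∀ i jj : Fin n, DifferentiableOn ℂ
        (fun p => LinearMap.toMatrix b b (LinearMap.id) i jj
          - ℓ i (Ring.inverse (u p) (v jj))) Ω := by
      intro i jj
      apply DifferentiableOn.const_sub
      have hκ : DifferentiableOn ℂ (fun p => Ring.inverse (u p)) Ω :=
        DifferentiableOn.inverse hudiff.differentiableOn hUnit
      have h1 : (fun p : (X →L[ℂ] Y) × ℂ => ℓ i (Ring.inverse (u p) (v jj))) =
          (fun w : X →L[ℂ] X => ℓ i (w (v jj))) ∘ (fun p => Ring.inverse (u p)) := rfl
      rw [h1]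
      exact (((ℓ i).comp (ContinuousLinearMap.apply ℂ X (v jj))).differentiable).comp_differentiableOn hκ
    have h2 : f = fun p => ∑ σ : Equiv.Perm (Fin n),
        ((Equiv.Perm.sign σ : ℤ) : ℂ) * ∏ i, (LinearMap.toMatrix b b (LinearMap.id) (σ i) i
          - ℓ (σ i) (Ring.inverse (u p) (v i))) := by
      funext p
      simp only [hf]
      rw [Matrix.det_apply']
      simp only [Matrix.of_apply]
    rw [h2]
    apply DifferentiableOn.fun_sum
    intro σ _
    exact (finset_prod_diffOn Finset.univ _ (fun i _ => hent (σ i) i)).const_mul _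
  have hcontΩ : ContinuousOn f Ω := hdiffΩ.continuousOn
  -- the key lemma: zeros of f are non-invertible operators
  have hkey : ∀ p ∈ Ω, f p = 0 → ¬ IsInvertibleOp (p.1 + p.2 • H) := by
    intro p hp hf0
    have hunit := hUnit p hp
    have hdet0 : LinearMap.det (Mlin p) = 0 := by rw [← hfdet p]; exact hf0
    have hkerne : LinearMap.ker (Mlin p) ≠ ⊥ :=
      (LinearMap.bot_lt_ker_of_det_eq_zero hdet0).ne'
    obtain ⟨k, hkmem, hkne⟩ := Submodule.exists_mem_ne_zero_of_ne_bot hkerne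
    have hkzero : Mlin p k = 0 := hkmem
    have hfix0 : P (Cmap p k) = k := by
      have h1 : k - P (Cmap p k) = 0 := by
        simpa [hMlin, LinearMap.sub_apply] using hkzero
      have := sub_eq_zero.mp h1
      exact this.symm
    set W : Y →L[ℂ] X := (Ring.inverse (u p)).comp R₀ with hW
    have hBu : ∀ x, (p.1 + p.2 • H + sj.comp P) x = (T + F) ((u p) x) := by
      intro x
      have h1 : (u p) x = x + R₀ ((p.1 - T + p.2 • H) x) := by
        simp [hudef, ContinuousLinearMap.add_apply, ContinuousLinearMap.comp_apply]
      rw [h1, map_add, hR₀r]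
      simp only [ContinuousLinearMap.add_apply, ContinuousLinearMap.sub_apply, hFdef,
        ContinuousLinearMap.comp_apply]
      abel
    have hWr : ∀ y, (p.1 + p.2 • H + sj.comp P) (W y) = y := by
      intro y
      rw [hBu]
      have h1 : (u p) (W y) = ((u p) * (Ring.inverse (u p))) (R₀ y) := by
        simp [hW, ContinuousLinearMap.mul_apply, ContinuousLinearMap.comp_apply]
      rw [h1, Ring.mul_inverse_cancel _ hunit, ContinuousLinearMap.one_apply, hR₀r]
    have hfix : P (W (sj k)) = k := by
      have : W (sj k) = Cmap p k := by
        simp [hW, hCmap, ContinuousLinearMap.comp_apply]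
      rw [this, hfix0]
    exact not_invertible_of_fixed P sj (p.1 + p.2 • H) W k hkne hfix hWr
  -- membership of the base slice in Ω
  have hballΩ : ∀ z : ℂ, ‖z‖ ≤ 2 → ((T, z) : (X →L[ℂ] Y) × ℂ) ∈ Ω := by
    intro z hz
    have h1 : ‖R₀.comp (T - T + z • H)‖ ≤ ‖R₀‖ * (‖z‖ * ‖H‖) := by
      have h1a := opNorm_comp_le R₀ (T - T + z • H)
      have h1b : ‖T - T + z • H‖ = ‖z‖ * ‖H‖ := by
        rw [sub_self, zero_add]
        exact norm_smul z H
      rwa [h1b] at h1a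
    have h2 : ‖R₀‖ * (‖z‖ * ‖H‖) < 1 := by
      have hR0 : (0:ℝ) ≤ ‖R₀‖ := norm_nonneg _
      have hH0 : (0:ℝ) ≤ ‖H‖ := norm_nonneg _
      have hz0 : (0:ℝ) ≤ ‖z‖ := norm_nonneg _
      nlinarith [hνmul, hν.le, mul_le_mul_of_nonneg_left hH.le hR0]
    exact lt_of_le_of_lt h1 h2
  set fT : ℂ → ℂ := fun z => f (T, z) with hfT
  have hfTdiff : DifferentiableOn ℂ fT (ball (0:ℂ) 2) := by
    have h1 : DifferentiableOn ℂ (f ∘ (fun z : ℂ => ((T : X →L[ℂ] Y), z))) (ball (0:ℂ) 2) := by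
      apply DifferentiableOn.comp hdiffΩ
      · exact ((differentiable_const _).prodMk differentiable_id).differentiableOn
      · intro z hz
        exact hballΩ z (le_of_lt (by simpa [mem_ball_iff_norm, sub_zero] using hz))
    exact h1
  have hfTan : AnalyticOnNhd ℂ fT (ball (0:ℂ) 2) := hfTdiff.analyticOnNhd isOpen_ball
  have h0mem : (0:ℂ) ∈ ball (0:ℂ) 2 := by norm_num [mem_ball_iff_norm]
  have h1mem : (1:ℂ) ∈ ball (0:ℂ) 2 := by norm_num [mem_ball_iff_norm]
  have hfT1 : fT 1 ≠ 0 := by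
    intro h0
    have h1 := hkey (T, 1) (hballΩ 1 (by norm_num)) h0
    simp only [one_smul] at h1
    exact h1 hTH
  have hfT0 : fT 0 = 0 := by
    have hu0 : u (T, 0) = 1 := by
      simp [hudef]
    have hR₀sj : ∀ k : N, R₀ (sj k) = (k : X) := by
      intro k
      have h1 : (T + F) (k : X) = sj k := by
        simp [hFdef, ContinuousLinearMap.add_apply, ContinuousLinearMap.comp_apply,
          hP k, hTk k]
      rw [← h1, hR₀l]
    have hM : Mlin (T, 0) k₀ = 0 := by
      have h2 : Cmap (T, 0) k₀ = (k₀ : X) := by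
        simp [hCmap, hu0, Ring.inverse_one, ContinuousLinearMap.comp_apply, hR₀sj k₀]
      simp [hMlin, LinearMap.sub_apply, h2, hP k₀]
    have hdet0 : LinearMap.det (Mlin (T, 0)) = 0 := by
      by_contra hne
      have hinj : Function.Injective (Mlin (T, 0)) := by
        have h2 := (LinearMap.equivOfDetNeZero _ hne).injective
        have h3 : ⇑(LinearMap.equivOfDetNeZero _ hne) = ⇑(Mlin (T, 0)) := rfl
        rwa [h3] at h2
      exact hk₀ (hinj (by rw [hM, map_zero]))
    show f ((T : X →L[ℂ] Y), (0:ℂ)) = 0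
    rw [hfdet]
    exact hdet0
  -- isolated zeros: a circle avoiding zeros of fT
  have hnotall : ¬ (∀ᶠ z in nhds (0:ℂ), fT z = 0) := by
    intro hev
    have hEq := hfTan.eqOn_zero_of_preconnected_of_eventuallyEq_zero
      (convex_ball (0:ℂ) 2).isPreconnected h0mem
      (by filter_upwards [hev] with z hz using hz)
    exact hfT1 (hEq h1mem)
  have hne := (hfTan 0 h0mem).eventually_eq_zero_or_eventually_ne_zero.resolve_left hnotall
  rw [eventually_nhdsWithin_iff] at hne
  obtain ⟨ρ, hρpos, hρ⟩ := Metric.eventually_nhds_iff.mp hne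
  set r : ℝ := min (ε/2) (min (ρ/2) 1) with hr
  have hr0 : 0 < r := by
    apply lt_min (by linarith)
    exact lt_min (by linarith) one_pos
  have hrε : r < ε := lt_of_le_of_lt (min_le_left _ _) (by linarith)
  have hrρ : r < ρ := lt_of_le_of_lt (le_trans (min_le_right _ _) (min_le_left _ _)) (by linarith)
  have hr1 : r ≤ 1 := le_trans (min_le_right _ _) (min_le_right _ _)
  have hsphere_ball : sphere (0:ℂ) r ⊆ ball (0:ℂ) 2 := by
    intro z hz
    have : ‖z‖ = r := by simpa [mem_sphere_iff_norm, sub_zero] using hz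
    simp only [mem_ball_iff_norm, sub_zero, this]
    linarith
  have hsphere_ne : ∀ z ∈ sphere (0:ℂ) r, fT z ≠ 0 := by
    intro z hz
    have hzn : ‖z‖ = r := by simpa [mem_sphere_iff_norm, sub_zero] using hz
    apply hρ
    · simpa [dist_eq_norm, hzn] using hrρ
    · simp only [mem_compl_iff, mem_singleton_iff]
      intro h
      rw [h, norm_zero] at hzn
      exact hr0.ne' hzn.symm
  have hsne : (sphere (0:ℂ) r).Nonempty := NormedSpace.sphere_nonempty.mpr hr0.le
  obtain ⟨zm, hzm, hzmin⟩ := (isCompact_sphere (0:ℂ) r).exists_isMinOn hsne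
    ((hfTdiff.continuousOn.mono hsphere_ball).norm)
  set m : ℝ := ‖fT zm‖ with hm
  have hm0 : 0 < m := norm_pos_iff.mpr (hsphere_ne zm hzm)
  -- tube lemma: uniform closeness for S near T
  set Ω₂ : Set ((X →L[ℂ] Y) × ℂ) := Ω ∩ {p | ((T, p.2) : (X →L[ℂ] Y) × ℂ) ∈ Ω} with hΩ₂
  have hΩ₂open : IsOpen Ω₂ := by
    apply hΩopen.inter
    exact hΩopen.preimage (continuous_const.prodMk continuous_snd)
  have hgcont : ContinuousOn (fun p => f p - f (T, p.2)) Ω₂ := by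
    apply ContinuousOn.sub
    · exact hcontΩ.mono inter_subset_left
    · exact hcontΩ.comp (continuous_const.prodMk continuous_snd).continuousOn
        (fun p hp => hp.2)
  set Θ : Set ((X →L[ℂ] Y) × ℂ) :=
    Ω₂ ∩ (fun p => f p - f (T, p.2)) ⁻¹' (ball (0:ℂ) (m/2)) with hΘ
  have hΘopen : IsOpen Θ := hgcont.isOpen_inter_preimage hΩ₂open isOpen_ball
  have hΘsub : ({(T : X →L[ℂ] Y)} ×ˢ closedBall (0:ℂ) r) ⊆ Θ := by
    rintro ⟨S', z⟩ ⟨hS', hz⟩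
    simp only [mem_singleton_iff] at hS'
    subst hS'
    have hz2 : ‖z‖ ≤ 2 := by
      have := mem_closedBall_zero_iff.mp hz
      linarith
    refine ⟨⟨hballΩ z hz2, hballΩ z hz2⟩, ?_⟩
    simp only [mem_preimage, sub_self, mem_ball_zero_iff, norm_zero]
    positivity
  obtain ⟨U, V, hUo, hVo, hTU, hCV, hUV⟩ := generalized_tube_lemma isCompact_singleton
    (isCompact_closedBall (0:ℂ) r) hΘopen hΘsub
  obtain ⟨δ₀, hδ₀pos, hδ₀⟩ := Metric.isOpen_iff.mp hUo T (hTU rfl)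
  refine ⟨min δ₀ ε, lt_min hδ₀pos hε, min_le_right _ _, ?_⟩
  intro S hS
  have hSU : S ∈ U := hδ₀ (by
    simp only [mem_ball, dist_eq_norm]
    exact lt_of_lt_of_le hS (min_le_left _ _))
  have hSz : ∀ z ∈ closedBall (0:ℂ) r, ((S, z) : (X →L[ℂ] Y) × ℂ) ∈ Θ :=
    fun z hz => hUV ⟨hSU, hCV hz⟩
  have hSzΩ : ∀ z ∈ closedBall (0:ℂ) r, ((S, z) : (X →L[ℂ] Y) × ℂ) ∈ Ω :=
    fun z hz => (hSz z hz).1.1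
  have hSzcl : ∀ z ∈ closedBall (0:ℂ) r, ‖f (S, z) - fT z‖ < m/2 := by
    intro z hz
    have := (hSz z hz).2
    simpa [mem_ball_zero_iff] using this
  -- find a zero of f(S, ·) in the closed ball
  have hzero : ∃ z ∈ closedBall (0:ℂ) r, f (S, z) = 0 := by
    by_contra hno
    push_neg at hno
    set fS : ℂ → ℂ := fun z => f (S, z) with hfS
    have hOopen1 : IsOpen {z : ℂ | ((S, z) : (X →L[ℂ] Y) × ℂ) ∈ Ω} :=
      hΩopen.preimage (continuous_const.prodMk continuous_id)
    have hfSdiffO : DifferentiableOn ℂ fS {z : ℂ | ((S, z) : (X →L[ℂ] Y) × ℂ) ∈ Ω} := by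
      have h1 : DifferentiableOn ℂ (f ∘ (fun z : ℂ => ((S : X →L[ℂ] Y), z)))
          {z : ℂ | ((S, z) : (X →L[ℂ] Y) × ℂ) ∈ Ω} := by
        apply DifferentiableOn.comp hdiffΩ
        · exact ((differentiable_const _).prodMk differentiable_id).differentiableOn
        · exact fun z hz => hz
      exact h1
    set O : Set ℂ := {z : ℂ | ((S, z) : (X →L[ℂ] Y) × ℂ) ∈ Ω} ∩ fS ⁻¹' ({(0:ℂ)}ᶜ) with hO
    have hOopen : IsOpen O :=
      (hfSdiffO.continuousOn).isOpen_inter_preimage hOopen1 isOpen_compl_singleton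
    have hclO : closedBall (0:ℂ) r ⊆ O := fun z hz => ⟨hSzΩ z hz, hno z hz⟩
    have hgd : DifferentiableOn ℂ (fun z => (fS z)⁻¹) (closedBall (0:ℂ) r) := by
      apply DifferentiableOn.mono _ hclO
      exact (hfSdiffO.mono inter_subset_left).inv (fun z hz => hz.2)
    have hdc : DiffContOnCl ℂ (fun z => (fS z)⁻¹) (ball (0:ℂ) r) :=
      DifferentiableOn.diffContOnCl (by rwa [closure_ball _ hr0.ne'])
    have hbd : ∀ z ∈ frontier (ball (0:ℂ) r), ‖(fS z)⁻¹‖ ≤ (m/2)⁻¹ := by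
      rw [frontier_ball _ hr0.ne']
      intro z hz
      have h1 : m ≤ ‖fT z‖ := hzmin hz
      have h2 : ‖fS z - fT z‖ < m/2 := hSzcl z (sphere_subset_closedBall hz)
      have h3 : m/2 ≤ ‖fS z‖ := by
        have h4 : ‖fT z‖ - ‖fS z‖ ≤ ‖fS z - fT z‖ := by
          rw [norm_sub_rev]
          exact norm_sub_norm_le _ _
        linarith
      rw [norm_inv]
      exact inv_anti₀ (by positivity) h3
    have hmax := Complex.norm_le_of_forall_mem_frontier_norm_le isBounded_ball hdc hbd
      (z := 0) (by rw [closure_ball _ hr0.ne']; exact mem_closedBall_self hr0.le)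
    have hfS0 : fS 0 ≠ 0 := hno 0 (mem_closedBall_self hr0.le)
    have hfS0pos : 0 < ‖fS 0‖ := norm_pos_iff.mpr hfS0
    have h5 : m/2 ≤ ‖fS 0‖ := by
      rw [norm_inv] at hmax
      have h6 := inv_anti₀ (by positivity : (0:ℝ) < ‖fS 0‖⁻¹) hmax
      rwa [inv_inv, inv_inv] at h6
    have h7 : ‖fS 0 - fT 0‖ < m/2 := hSzcl 0 (mem_closedBall_self hr0.le)
    rw [hfT0, sub_zero] at h7
    have : ‖fS 0‖ = ‖f (S, 0)‖ := rfl
    linarith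
  obtain ⟨z₀, hz₀, hfz₀⟩ := hzero
  refine ⟨z₀, lt_of_le_of_lt (mem_closedBall_zero_iff.mp hz₀) hrε, ?_⟩
  exact hkey (S, z₀) (hSzΩ z₀ hz₀) hfz₀
end
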